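/- Let X be an abelian group with automorphism t : X → X such that 1−t is also an automorphism. Let G be the quotient of the free abelian group ℤ⟨X×X⟩ by the subgroup generated by the elements (a,(1−t)a), (a,0), (0,a) for all a ∈ X, and the elements (x,z) − (x,y) − (tx+y, z) + (tx+z, ty+(1−t)z) for all x,y,z ∈ X; write [a,b] for the class of (a,b) in G. Then [a, b] = [b, t a] in G for all a, b ∈ X. -/
import Mathlib


open FreeAbelianGroup TensorProduct

/-- **Lemma.** In the group `G` (the quotient of `ℤ⟨X × X⟩` by the stated
relations, with bracket `br a b = [a, b]`), one has `[a, b] = [b, t a]`. -/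
theorem bracket_swap_relation
    {X : Type*} [AddCommGroup X] (t : X ≃+ X)
    (ht : Function.Bijective fun x : X => x - t x)
    (Rel : AddSubgroup (FreeAbelianGroup (X × X)))
    (hRel : Rel = AddSubgroup.closure
      ({z | ∃ a : X, z = of (a, a - t a)} ∪ {z | ∃ a : X, z = of (a, (0 : X))} ∪
        {z | ∃ a : X, z = of ((0 : X), a)} ∪
        {z | ∃ x y w : X, z = of (x, w) - of (x, y) - of (t x + y, w)
          + of (t x + w, t y + (w - t w))}))
    (br : X → X → FreeAbelianGroup (X × X) ⧸ Rel)
    (hbr : ∀ a b : X, br a b = QuotientAddGroup.mk (of (a, b)))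
    : ∀ a b : X, br a b = br b (t a) := by
  intro a b
  rw [hbr a b, hbr b (t a), QuotientAddGroup.eq]
  have h4 : ∀ x y w : X, of (x, w) - of (x, y) - of (t x + y, w)
      + of (t x + w, t y + (w - t w)) ∈ Rel := by
    intro x y w
    rw [hRel]
    exact AddSubgroup.subset_closure (Or.inr ⟨x, y, w, rfl⟩)
  have h3 : ∀ c : X, of ((0 : X), c) ∈ Rel := by
    intro c
    rw [hRel]
    exact AddSubgroup.subset_closure (Or.inl (Or.inr ⟨c, rfl⟩))
  have hB : ∀ y w : X, of (w, t y + (w - t w)) - of (y, w) ∈ Rel := by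
    intro y w
    have h := h4 0 y w
    simp only [map_zero, zero_add] at h
    have e : of (w, t y + (w - t w)) - of (y, w)
        = (of ((0:X), w) - of ((0:X), y) - of (y, w) + of (w, t y + (w - t w)))
          + of ((0:X), y) - of ((0:X), w) := by abel
    rw [e]
    exact sub_mem (add_mem h (h3 y)) (h3 w)
  have g1 : of (b, t a + (b - t b)) - of (a, b) ∈ Rel := hB a b
  have g3 : of (t a, t a + t b) - of (t a + b, t a) ∈ Rel := by
    have h := hB (t a + b) (t a)
    have e : t (t a + b) + (t a - t (t a)) = t a + t b := by
      rw [map_add]; abel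
    rw [e] at h; exact h
  have g4 : of (t a + t b, t a + (t b - t (t b))) - of (t a, t a + t b) ∈ Rel := by
    have h := hB (t a) (t a + t b)
    have e : t (t a) + (t a + t b - t (t a + t b)) = t a + (t b - t (t b)) := by
      rw [map_add]; abel
    rw [e] at h; exact h
  have g2 : of (b, t a) - of (b, t a + (b - t b)) - of (t a + b, t a)
      + of (t a + t b, t a + (t b - t (t b))) ∈ Rel := by
    have h := h4 b (t a + (b - t b)) (t a)
    have e1 : t b + (t a + (b - t b)) = t a + b := by abel
    have e2 : t b + t a = t a + t b := by abel
    have e3 : t (t a + (b - t b)) + (t a - t (t a)) = t a + (t b - t (t b)) := by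
      rw [map_add, map_sub]; abel
    rw [e1, e2, e3] at h; exact h
  have key : -of (a, b) + of (b, t a)
      = (of (b, t a + (b - t b)) - of (a, b))
        + (of (b, t a) - of (b, t a + (b - t b)) - of (t a + b, t a)
            + of (t a + t b, t a + (t b - t (t b))))
        - (of (t a, t a + t b) - of (t a + b, t a))
        - (of (t a + t b, t a + (t b - t (t b))) - of (t a, t a + t b)) := by abel
  rw [key]
  exact sub_mem (sub_mem (add_mem g1 g2) g3) g4
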